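/- For any L ∈ ℕ there exists φ ∈ NN_{2,1}(8, 2L) such that φ(x,ℓ) = x_ℓ for every x of the form x = Σ_{j=1}^L x_j 2^{−j} with x_j ∈ {0,1} and every ℓ ∈ {1,2,…,L}. Furthermore, |φ(x,ℓ) − φ(x′,ℓ′)| ≤ 2·2^{L²}·|x−x′| + L·|ℓ−ℓ′| for all x, x′, ℓ, ℓ′ ∈ ℝ. -/

import Mathlib

open Finset
open scoped BigOperators

/-- ReLU activation. -/
noncomputable def relu (x : ℝ) : ℝ := max x 0

/-- Parameters of a fully connected feed-forward ReLU neural network with input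
dimension `d` and output dimension `k`. -/
structure MLP (d k : ℕ) where
  depth : ℕ
  width : ℕ → ℕ
  width_in : width 0 = d
  width_out : width (depth + 1) = k
  A : (ℓ : ℕ) → Matrix (Fin (width (ℓ + 1))) (Fin (width ℓ)) ℝ
  b : (ℓ : ℕ) → Fin (width (ℓ + 1)) → ℝ

namespace MLP

variable {d k : ℕ}

/-- Hidden layer outputs: `φ₀(x) = x`, `φ_{ℓ+1}(x) = σ(A_ℓ φ_ℓ(x) + b_ℓ)`. -/
noncomputable def layer (φ : MLP d k) (x : Fin d → ℝ) : (ℓ : ℕ) → Fin (φ.width ℓ) → ℝ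
  | 0 => fun i => x (Fin.cast φ.width_in i)
  | ℓ + 1 => fun i => relu ((φ.A ℓ).mulVec (layer φ x ℓ) i + φ.b ℓ i)

/-- The function computed by the network: `φ(x) = A_L φ_L(x) + b_L`. -/
noncomputable def eval (φ : MLP d k) (x : Fin d → ℝ) : Fin k → ℝ := fun j =>
  (φ.A φ.depth).mulVec (φ.layer x φ.depth) (Fin.cast φ.width_out.symm j) +
    φ.b φ.depth (Fin.cast φ.width_out.symm j)

/-- Maximum ℓ¹-norm of the rows of the augmented matrix `(A, b)`. -/
noncomputable def augNorm {m n : ℕ} (A : Matrix (Fin m) (Fin n) ℝ) (b : Fin m → ℝ) : ℝ :=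
  ⨆ i : Fin m, ((∑ j, |A i j|) + |b i|)

/-- The norm constraint `κ(θ) = ‖(A_L,b_L)‖ ∏_{ℓ<L} max{‖(A_ℓ,b_ℓ)‖, 1}`. -/
noncomputable def kappa (φ : MLP d k) : ℝ :=
  augNorm (φ.A φ.depth) (φ.b φ.depth) *
    ∏ ℓ ∈ Finset.range φ.depth, max (augNorm (φ.A ℓ) (φ.b ℓ)) 1

end MLP

/-- The class `NN_{d,k}(W, L)` of ReLU networks with width at most `W` and depth `L`. -/
def NNSet (d k W L : ℕ) : Set ((Fin d → ℝ) → Fin k → ℝ) :=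
  {f | ∃ φ : MLP d k, φ.depth = L ∧ (∀ ℓ, 1 ≤ ℓ → ℓ ≤ L → φ.width ℓ ≤ W) ∧ f = φ.eval}

/-- The norm-constrained class `NN_{d,k}(W, L, K)`. -/
def NNSetNorm (d k W L : ℕ) (K : ℝ) : Set ((Fin d → ℝ) → Fin k → ℝ) :=
  {f | ∃ φ : MLP d k, φ.depth = L ∧ (∀ ℓ, 1 ≤ ℓ → ℓ ≤ L → φ.width ℓ ≤ W) ∧
      φ.kappa ≤ K ∧ f = φ.eval}

/-- Scalar-valued networks `NN_{d,1}(W, L)`, viewed as maps `ℝ^d → ℝ`. -/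
def NNScalar (d W L : ℕ) : Set ((Fin d → ℝ) → ℝ) :=
  {f | ∃ g ∈ NNSet d 1 W L, f = fun x => g x 0}

/-- Scalar-valued norm-constrained networks `NN_{d,1}(W, L, K)`, viewed as maps `ℝ^d → ℝ`. -/
def NNScalarNorm (d W L : ℕ) (K : ℝ) : Set ((Fin d → ℝ) → ℝ) :=
  {f | ∃ g ∈ NNSetNorm d 1 W L K, f = fun x => g x 0}

/-- Networks `NN_{1,k}(W, L)` with one-dimensional input, viewed as maps `ℝ → ℝ^k`. -/
def NNFromReal (k W L : ℕ) : Set (ℝ → Fin k → ℝ) :=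
  {f | ∃ g ∈ NNSet 1 k W L, f = fun t => g (fun _ => t)}

/-- Norm-constrained networks `NN_{1,1}(W, L, K)`, viewed as maps `ℝ → ℝ`. -/
def NNRealScalarNorm (W L : ℕ) (K : ℝ) : Set (ℝ → ℝ) :=
  {f | ∃ g ∈ NNSetNorm 1 1 W L K, f = fun t => g (fun _ => t) 0}

-- ==== auxiliary development ====

lemma relu_nonneg (x : ℝ) : 0 ≤ relu x := le_max_right x 0
lemma relu_of_nonneg {x : ℝ} (h : 0 ≤ x) : relu x = x := max_eq_left h
lemma relu_of_nonpos {x : ℝ} (h : x ≤ 0) : relu x = 0 := max_eq_right h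
lemma relu_relu (x : ℝ) : relu (relu x) = relu x := relu_of_nonneg (relu_nonneg x)
lemma relu_lip (s t : ℝ) : |relu s - relu t| ≤ |s - t| := abs_max_sub_max_le_abs s t 0

lemma relu_relu_sub {c : ℝ} (hc : 0 ≤ c) (l : ℝ) : relu (relu l - c) = relu (l - c) := by
  rcases le_total l 0 with h | h
  · rw [relu_of_nonpos h, relu_of_nonpos (by linarith), relu_of_nonpos (by linarith)]
  · rw [relu_of_nonneg h]

lemma min_lip (s t c : ℝ) : |min s c - min t c| ≤ |s - t| := by
  have h1 := le_abs_self (s - t)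
  have h2 := neg_abs_le (s - t)
  have h3 := abs_nonneg (s - t)
  rw [abs_le]
  rcases le_total s c with h | h <;> rcases le_total t c with h' | h' <;>
    simp only [min_eq_left, min_eq_right, h, h'] <;> constructor <;> linarith

lemma relu_sub_relu {g : ℝ} (hg : 0 ≤ g) (u : ℝ) :
    relu u - relu (u - g) = min (relu u) g := by
  rcases le_total u 0 with h | h
  · rw [relu_of_nonpos h, relu_of_nonpos (by linarith)]
    rw [min_eq_left hg]; ring
  · rw [relu_of_nonneg h]
    rcases le_total u g with h' | h'
    · rw [relu_of_nonpos (by linarith), min_eq_left h']; ring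
    · rw [relu_of_nonneg (by linarith), min_eq_right h']; ring

lemma hat_id (u : ℝ) :
    relu (u + 1) - 2 * relu u + relu (u - 1) = max 0 (1 - |u|) := by
  rcases le_total u 0 with h | h
  · rw [relu_of_nonpos h, abs_of_nonpos h]
    rcases le_total u (-1) with h1 | h1
    · rw [relu_of_nonpos (by linarith), relu_of_nonpos (by linarith),
        max_eq_left (by linarith)]
      ring
    · rw [relu_of_nonneg (by linarith), relu_of_nonpos (by linarith),
        max_eq_right (by linarith)]
      ring
  · rw [relu_of_nonneg h, abs_of_nonneg h]
    rcases le_total u 1 with h1 | h1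
    · rw [relu_of_nonneg (by linarith), relu_of_nonpos (by linarith),
        max_eq_right (by linarith)]
      ring
    · rw [relu_of_nonneg (by linarith), relu_of_nonneg (by linarith),
        max_eq_left (by linarith)]
      ring

noncomputable def GG (L k : ℕ) : ℝ := 2 ^ (L + 1 - k)
noncomputable def gg (L k : ℕ) : ℝ := (GG L k)⁻¹
noncomputable def aa (L k : ℕ) : ℝ := 1 / 2 - gg L k

lemma GG_pos (L k : ℕ) : 0 < GG L k := by unfold GG; positivity
lemma gg_pos (L k : ℕ) : 0 < gg L k := by unfold gg GG; positivity
lemma gg_mul_GG (L k : ℕ) : gg L k * GG L k = 1 := inv_mul_cancel₀ (GG_pos L k).ne'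
lemma aa_nonneg {L k : ℕ} (hL : 1 ≤ L) (hk : k ≤ L) : 0 ≤ aa L k := by
  unfold aa gg GG
  have h1 : (2 : ℝ) ≤ 2 ^ (L + 1 - k) := by
    calc (2:ℝ) = 2 ^ 1 := (pow_one 2).symm
    _ ≤ 2 ^ (L + 1 - k) := by
      apply pow_le_pow_right₀ (by norm_num); omega
  have h2 : ((2:ℝ) ^ (L + 1 - k))⁻¹ ≤ 1/2 := by
    rw [inv_le_comm₀ (by positivity) (by norm_num)]
    simpa using h1
  linarith

noncomputable def Bit (L k : ℕ) (t : ℝ) : ℝ :=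
  (relu (t - aa L k) - relu (t - aa L k - gg L k)) * GG L k

noncomputable def Rr (L : ℕ) : ℕ → ℝ → ℝ
  | 0 => fun x => relu x
  | k + 1 => fun x => relu (2 * Rr L k x - Bit L (k + 1) (Rr L k x))

lemma Rr_nonneg (L k : ℕ) (x : ℝ) : 0 ≤ Rr L k x := by
  cases k <;> exact relu_nonneg _

noncomputable def T0 (k : ℕ) (l : ℝ) : ℝ :=
  relu (relu l - (k : ℝ)) - 2 * relu (relu l - ((k : ℝ) + 1)) + relu (relu l - ((k : ℝ) + 2))

noncomputable def W0 (L k : ℕ) (x l : ℝ) : ℝ :=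
  relu (Bit L (k + 1) (Rr L k x) + T0 k l - 1)

lemma W0_nonneg (L k : ℕ) (x l : ℝ) : 0 ≤ W0 L k x l := relu_nonneg _

noncomputable def SW (L k : ℕ) (x l : ℝ) : ℝ := ∑ j ∈ Finset.range k, W0 L j x l

lemma SW_nonneg (L k : ℕ) (x l : ℝ) : 0 ≤ SW L k x l :=
  Finset.sum_nonneg fun j _ => W0_nonneg L j x l

/- coefficient matrices -/
noncomputable def inCoef (i j : ℕ) : ℝ :=
  if j = 0 then (if i ≤ 2 then 1 else 0)
  else if j = 1 then (if i = 3 ∨ i = 4 ∨ i = 5 ∨ i = 7 then 1 else 0) else 0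

noncomputable def inBias (L i : ℕ) : ℝ :=
  if i = 1 then -aa L 1 else if i = 2 then -(aa L 1 + gg L 1)
  else if i = 4 then -1 else if i = 5 then -2 else 0

noncomputable def oddCoef (L k i j : ℕ) : ℝ :=
  if i = 0 then (if j = 0 then 2 else if j = 1 then -GG L k else if j = 2 then GG L k else 0)
  else if i = 1 then (if j = 1 then GG L k else if j = 2 then -GG L k
    else if j = 3 then 1 else if j = 4 then -2 else if j = 5 then 1 else 0)
  else if i = 2 then (if j = 6 then 1 else 0)
  else if i = 3 then (if j = 7 then 1 else 0) else 0

noncomputable def oddBias (i : ℕ) : ℝ := if i = 1 then -1 else 0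

noncomputable def evenCoef (i j : ℕ) : ℝ :=
  if j = 0 then (if i ≤ 2 then 1 else 0)
  else if j = 1 then (if i = 6 then 1 else 0)
  else if j = 2 then (if i = 6 then 1 else 0)
  else if j = 3 then (if i = 3 ∨ i = 4 ∨ i = 5 ∨ i = 7 then 1 else 0) else 0

noncomputable def evenBias (L k i : ℕ) : ℝ :=
  if i = 1 then -aa L (k + 1) else if i = 2 then -(aa L (k + 1) + gg L (k + 1))
  else if i = 3 then -(k : ℝ) else if i = 4 then -((k : ℝ) + 1)
  else if i = 5 then -((k : ℝ) + 2) else 0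

noncomputable def outCoef (j : ℕ) : ℝ := if j = 1 ∨ j = 2 then 1 else 0

noncomputable def coef (L m i j : ℕ) : ℝ :=
  if m = 0 then inCoef i j
  else if m = 2 * L then outCoef j
  else if m % 2 = 1 then oddCoef L ((m + 1) / 2) i j
  else evenCoef i j

noncomputable def bias (L m i : ℕ) : ℝ :=
  if m = 0 then inBias L i
  else if m = 2 * L then 0
  else if m % 2 = 1 then oddBias i
  else evenBias L (m / 2) i

noncomputable def net (L : ℕ) : MLP 2 1 where
  depth := 2 * L
  width := fun m => if m = 0 then 2 else if m = 2 * L + 1 then 1 else 8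
  width_in := by simp
  width_out := by simp
  A := fun m i j => coef L m i.val j.val
  b := fun m i => bias L m i.val

lemma net_width_hidden (L m : ℕ) (h0 : m ≠ 0) (h1 : m ≠ 2 * L + 1) :
    (net L).width m = 8 := by simp [net, h0, h1]

lemma net_width_zero (L : ℕ) : (net L).width 0 = 2 := by simp [net]

noncomputable def inpVal (v : Fin 2 → ℝ) (n : ℕ) : ℝ := if n = 0 then v 0 else v 1

noncomputable def oddVal (L k : ℕ) (x l : ℝ) (i : ℕ) : ℝ :=
  if i = 0 then Rr L k x
  else if i = 1 then relu (Rr L k x - aa L (k + 1))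
  else if i = 2 then relu (Rr L k x - aa L (k + 1) - gg L (k + 1))
  else if i = 3 then relu (relu l - (k : ℝ))
  else if i = 4 then relu (relu l - ((k : ℝ) + 1))
  else if i = 5 then relu (relu l - ((k : ℝ) + 2))
  else if i = 6 then SW L k x l
  else if i = 7 then relu l else 0

noncomputable def evenVal (L k : ℕ) (x l : ℝ) (i : ℕ) : ℝ :=
  if i = 0 then Rr L (k + 1) x
  else if i = 1 then W0 L k x l
  else if i = 2 then SW L k x l
  else if i = 3 then relu l else 0

lemma layer_zero (L : ℕ) (v : Fin 2 → ℝ) (j : Fin ((net L).width 0)) :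
    (net L).layer v 0 j = inpVal v j.val := by
  show v (Fin.cast (net L).width_in j) = _
  have hj : j.val < 2 := by
    have h := (Fin.cast (net L).width_in j).isLt
    simpa only [Fin.coe_cast] using h
  unfold inpVal
  by_cases h : j.val = 0
  · have h2 : Fin.cast (net L).width_in j = 0 := Fin.ext (by simpa using h)
    rw [h2, if_pos h]
  · have h1 : j.val = 1 := by omega
    have h2 : Fin.cast (net L).width_in j = 1 := Fin.ext (by simpa using h1)
    rw [h2, if_neg h]

lemma layer_succ (L : ℕ) (v : Fin 2 → ℝ) (m : ℕ) (f : ℕ → ℝ)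
    (hf : ∀ j : Fin ((net L).width m), (net L).layer v m j = f j.val)
    (i : Fin ((net L).width (m + 1))) :
    (net L).layer v (m + 1) i
      = relu ((∑ j ∈ Finset.range ((net L).width m), coef L m i.val j * f j)
          + bias L m i.val) := by
  have h1 : (net L).layer v (m + 1) i
      = relu (((net L).A m).mulVec ((net L).layer v m) i + (net L).b m i) := rfl
  rw [h1]
  congr 1
  have h2 : ((net L).A m).mulVec ((net L).layer v m) i
      = ∑ j : Fin ((net L).width m), coef L m i.val j.val * f j.val := by
    unfold Matrix.mulVec dotProduct
    exact Finset.sum_congr rfl fun j _ => by rw [hf j]; rfl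
  rw [h2, Fin.sum_univ_eq_sum_range (fun n => coef L m i.val n * f n)]
  rfl

lemma coef_odd (L k i j : ℕ) : coef L (2 * k + 1) i j = oddCoef L (k + 1) i j := by
  unfold coef
  rw [if_neg (by omega), if_neg (by omega), if_pos (by omega),
    show (2 * k + 1 + 1) / 2 = k + 1 by omega]

lemma bias_odd (L k i : ℕ) : bias L (2 * k + 1) i = oddBias i := by
  unfold bias
  rw [if_neg (by omega), if_neg (by omega), if_pos (by omega)]

lemma coef_even (L k i j : ℕ) (h : k + 1 < L) : coef L (2 * k + 2) i j = evenCoef i j := by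
  unfold coef
  rw [if_neg (by omega), if_neg (by omega), if_neg (by omega)]

lemma bias_even (L k i : ℕ) (h : k + 1 < L) : bias L (2 * k + 2) i = evenBias L (k + 1) i := by
  unfold bias
  rw [if_neg (by omega), if_neg (by omega), if_neg (by omega),
    show (2 * k + 2) / 2 = k + 1 by omega]

lemma coef_out (L i j : ℕ) (hL : 1 ≤ L) : coef L (2 * L) i j = outCoef j := by
  unfold coef
  rw [if_neg (by omega), if_pos rfl]

lemma bias_out (L i : ℕ) (hL : 1 ≤ L) : bias L (2 * L) i = 0 := by
  unfold bias
  rw [if_neg (by omega), if_pos rfl]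

lemma base_odd (L : ℕ) (hL : 0 < L) (v : Fin 2 → ℝ)
    (i : Fin ((net L).width (0 + 1))) :
    (net L).layer v (0 + 1) i = oddVal L 0 (v 0) (v 1) i.val := by
  rw [layer_succ L v 0 (inpVal v) (layer_zero L v) i, net_width_zero]
  have hlt : i.val < 8 :=
    Nat.lt_of_lt_of_le i.isLt (net_width_hidden L 1 (by omega) (by omega)).le
  have haa : 0 ≤ aa L 1 := aa_nonneg hL (by omega)
  have hg : 0 ≤ aa L 1 + gg L 1 := by have := gg_pos L 1; linarith
  obtain ⟨n, hn, hlt⟩ : ∃ n, i.val = n ∧ n < 8 := ⟨i.val, rfl, hlt⟩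
  rw [hn]
  have h0 : coef L 0 = inCoef := by unfold coef; simp
  have hb : bias L 0 = inBias L := by unfold bias; simp
  rw [h0, hb]
  interval_cases n
  · norm_num [inCoef, inBias, inpVal, oddVal, Finset.sum_range_succ, Rr]
  · norm_num [inCoef, inBias, inpVal, oddVal, Finset.sum_range_succ, Rr]
    rw [relu_relu_sub haa]
    congr 1
  · norm_num [inCoef, inBias, inpVal, oddVal, Finset.sum_range_succ, Rr]
    rw [show relu (v 0) - aa L 1 - gg L 1 = relu (v 0) - (aa L 1 + gg L 1) by ring,
      relu_relu_sub hg]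
    congr 1; ring
  · norm_num [inCoef, inBias, inpVal, oddVal, Finset.sum_range_succ, relu_relu]
  · norm_num [inCoef, inBias, inpVal, oddVal, Finset.sum_range_succ, Rr]
    rw [relu_relu_sub (by norm_num : (0:ℝ) ≤ 1)]
    congr 1
  · norm_num [inCoef, inBias, inpVal, oddVal, Finset.sum_range_succ, Rr]
    rw [relu_relu_sub (by norm_num : (0:ℝ) ≤ 2)]
    congr 1
  · norm_num [inCoef, inBias, inpVal, oddVal, Finset.sum_range_succ, SW, relu]
  · norm_num [inCoef, inBias, inpVal, oddVal, Finset.sum_range_succ, relu_relu]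

lemma even_from_odd (L k : ℕ) (hk : k < L) (v : Fin 2 → ℝ)
    (hodd : ∀ j : Fin ((net L).width (2 * k + 1)),
      (net L).layer v (2 * k + 1) j = oddVal L k (v 0) (v 1) j.val)
    (i : Fin ((net L).width (2 * k + 1 + 1))) :
    (net L).layer v (2 * k + 1 + 1) i = evenVal L k (v 0) (v 1) i.val := by
  rw [layer_succ L v (2 * k + 1) (oddVal L k (v 0) (v 1)) hodd i,
    net_width_hidden L (2 * k + 1) (by omega) (by omega)]
  have hlt : i.val < 8 :=
    Nat.lt_of_lt_of_le i.isLt (net_width_hidden L (2 * k + 2) (by omega) (by omega)).le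
  obtain ⟨n, hn, hlt⟩ : ∃ n, i.val = n ∧ n < 8 := ⟨i.val, rfl, hlt⟩
  rw [hn]
  have h0 : ∀ a c, coef L (2 * k + 1) a c = oddCoef L (k + 1) a c := coef_odd L k
  have hb : ∀ a, bias L (2 * k + 1) a = oddBias a := bias_odd L k
  simp only [h0, hb]
  interval_cases n
  · norm_num [oddCoef, oddBias, oddVal, evenVal, Finset.sum_range_succ]
    rw [show Rr L (k+1) (v 0)
        = relu (2 * Rr L k (v 0) - Bit L (k+1) (Rr L k (v 0))) from rfl]
    congr 1
    unfold Bit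
    ring
  · norm_num [oddCoef, oddBias, oddVal, evenVal, Finset.sum_range_succ]
    unfold W0 Bit T0
    congr 1
    ring
  · norm_num [oddCoef, oddBias, oddVal, evenVal, Finset.sum_range_succ]
    exact relu_of_nonneg (SW_nonneg L k (v 0) (v 1))
  · norm_num [oddCoef, oddBias, oddVal, evenVal, Finset.sum_range_succ, relu_relu]
  · norm_num [oddCoef, oddBias, oddVal, evenVal, Finset.sum_range_succ, relu]
  · norm_num [oddCoef, oddBias, oddVal, evenVal, Finset.sum_range_succ, relu]
  · norm_num [oddCoef, oddBias, oddVal, evenVal, Finset.sum_range_succ, relu]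
  · norm_num [oddCoef, oddBias, oddVal, evenVal, Finset.sum_range_succ, relu]

lemma odd_from_even (L k : ℕ) (hk : k + 1 < L) (v : Fin 2 → ℝ)
    (heven : ∀ j : Fin ((net L).width (2 * k + 2)),
      (net L).layer v (2 * k + 2) j = evenVal L k (v 0) (v 1) j.val)
    (i : Fin ((net L).width (2 * k + 2 + 1))) :
    (net L).layer v (2 * k + 2 + 1) i = oddVal L (k + 1) (v 0) (v 1) i.val := by
  rw [layer_succ L v (2 * k + 2) (evenVal L k (v 0) (v 1)) heven i,
    net_width_hidden L (2 * k + 2) (by omega) (by omega)]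
  have hlt : i.val < 8 :=
    Nat.lt_of_lt_of_le i.isLt (net_width_hidden L (2 * k + 3) (by omega) (by omega)).le
  obtain ⟨n, hn, hlt⟩ : ∃ n, i.val = n ∧ n < 8 := ⟨i.val, rfl, hlt⟩
  rw [hn]
  have h0 : ∀ a c, coef L (2 * k + 2) a c = evenCoef a c := fun a c => coef_even L k a c hk
  have hb : ∀ a, bias L (2 * k + 2) a = evenBias L (k + 1) a := fun a => bias_even L k a hk
  simp only [h0, hb]
  interval_cases n
  · norm_num [evenCoef, evenBias, oddVal, evenVal, Finset.sum_range_succ]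
    exact relu_of_nonneg (Rr_nonneg L (k + 1) (v 0))
  · norm_num [evenCoef, evenBias, oddVal, evenVal, Finset.sum_range_succ]
    congr 1
  · norm_num [evenCoef, evenBias, oddVal, evenVal, Finset.sum_range_succ]
    congr 1
    ring
  · norm_num [evenCoef, evenBias, oddVal, evenVal, Finset.sum_range_succ]
    congr 1
    push_cast
    ring
  · norm_num [evenCoef, evenBias, oddVal, evenVal, Finset.sum_range_succ]
    congr 1
    push_cast
    ring
  · norm_num [evenCoef, evenBias, oddVal, evenVal, Finset.sum_range_succ]
    congr 1
    push_cast
    ring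
  · norm_num [evenCoef, evenBias, oddVal, evenVal, Finset.sum_range_succ, SW,
      Finset.sum_range_succ]
    rw [relu_of_nonneg]
    · ring
    · have := SW_nonneg L k (v 0) (v 1)
      have := W0_nonneg L k (v 0) (v 1)
      unfold SW at *
      linarith
  · norm_num [evenCoef, evenBias, oddVal, evenVal, Finset.sum_range_succ, relu_relu]

lemma layer_spec (L : ℕ) (v : Fin 2 → ℝ) :
    ∀ k, k < L →
    (∀ i : Fin ((net L).width (2 * k + 1)),
        (net L).layer v (2 * k + 1) i = oddVal L k (v 0) (v 1) i.val) ∧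
    (∀ i : Fin ((net L).width (2 * k + 2)),
        (net L).layer v (2 * k + 2) i = evenVal L k (v 0) (v 1) i.val) := by
  intro k
  induction k with
  | zero =>
    intro hk
    refine ⟨fun i => base_odd L hk v i, fun i => even_from_odd L 0 hk v ?_ i⟩
    exact fun j => base_odd L hk v j
  | succ k ih =>
    intro hk
    have h1 := (ih (by omega)).2
    have hodd : ∀ i : Fin ((net L).width (2 * (k + 1) + 1)),
        (net L).layer v (2 * (k + 1) + 1) i = oddVal L (k + 1) (v 0) (v 1) i.val :=
      fun i => odd_from_even L k hk v h1 i
    exact ⟨hodd, fun i => even_from_odd L (k + 1) hk v hodd i⟩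

lemma eval_spec (L : ℕ) (hL : 1 ≤ L) (v : Fin 2 → ℝ) :
    (net L).eval v 0 = ∑ j ∈ Finset.range L, W0 L j (v 0) (v 1) := by
  obtain ⟨n, rfl⟩ : ∃ n, L = n + 1 := ⟨L - 1, by omega⟩
  have hspec := (layer_spec (n + 1) v n (by omega)).2
  have h1 : (net (n + 1)).eval v 0
      = ((net (n + 1)).A (2 * (n + 1))).mulVec ((net (n + 1)).layer v (2 * (n + 1)))
          (Fin.cast (net (n + 1)).width_out.symm 0)
        + (net (n + 1)).b (2 * (n + 1)) (Fin.cast (net (n + 1)).width_out.symm 0) := rfl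
  rw [h1]
  have h2 : ((net (n + 1)).A (2 * (n + 1))).mulVec ((net (n + 1)).layer v (2 * (n + 1)))
        (Fin.cast (net (n + 1)).width_out.symm 0)
      = ∑ j : Fin ((net (n + 1)).width (2 * (n + 1))),
          coef (n + 1) (2 * (n + 1)) 0 j.val * evenVal (n + 1) n (v 0) (v 1) j.val := by
    unfold Matrix.mulVec dotProduct
    refine Finset.sum_congr rfl fun j _ => ?_
    have h3 : (net (n+1)).layer v (2*(n+1)) j = evenVal (n+1) n (v 0) (v 1) j.val := hspec j
    show coef (n+1) (2*(n+1)) ((Fin.cast (net (n + 1)).width_out.symm 0)).val j.val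
        * (net (n+1)).layer v (2*(n+1)) j = _
    rw [h3]
    norm_num
  rw [h2, Fin.sum_univ_eq_sum_range
    (fun m => coef (n + 1) (2 * (n + 1)) 0 m * evenVal (n + 1) n (v 0) (v 1) m),
    net_width_hidden (n + 1) (2 * (n + 1)) (by omega) (by omega)]
  have hb : (net (n + 1)).b (2 * (n + 1)) (Fin.cast (net (n + 1)).width_out.symm 0) = 0 := by
    show bias (n + 1) (2 * (n + 1)) _ = 0
    exact bias_out (n + 1) _ (by omega)
  rw [hb]
  have hc : ∀ c, coef (n + 1) (2 * (n + 1)) 0 c = outCoef c :=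
    fun c => coef_out (n + 1) 0 c (by omega)
  simp only [hc]
  norm_num [outCoef, evenVal, Finset.sum_range_succ]
  unfold SW
  ring

lemma geo : ∀ n m : ℕ, m ≤ n + 1 →
    ∑ j ∈ Finset.Icc m n, (2:ℝ) ^ (-(j:ℤ)) = 2 ^ (1 - (m:ℤ)) - 2 ^ (-(n:ℤ)) := by
  intro n
  induction n with
  | zero =>
    intro m hm
    interval_cases m <;> norm_num
  | succ n ih =>
    intro m hm
    rcases Nat.lt_or_ge m (n + 2) with h | h
    · rcases Nat.lt_or_ge m (n + 1) with h' | h'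
      · rw [Finset.sum_Icc_succ_top (by omega : m ≤ n + 1), ih m (by omega)]
        have h2 : (2:ℝ) ^ (-(n:ℤ)) = 2 * 2 ^ (-((n:ℤ)+1)) := by
          rw [show (-(n:ℤ)) = (-((n:ℤ)+1)) + 1 by ring,
            zpow_add_one₀ (by norm_num : (2:ℝ) ≠ 0)]
          ring
        push_cast
        push_cast at h2
        linarith
      · have hm' : m = n + 1 := by omega
        subst hm'
        rw [Finset.Icc_self, Finset.sum_singleton]
        push_cast
        have : (2:ℝ) ^ (1 - ((n:ℤ)+1)) = 2 ^ (-(n:ℤ)) := by congr 1; ring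
        rw [this]
        have h2 : (2:ℝ) ^ (-(n:ℤ)) = 2 * 2 ^ (-((n:ℤ)+1)) := by
          rw [show (-(n:ℤ)) = (-((n:ℤ)+1)) + 1 by ring,
            zpow_add_one₀ (by norm_num : (2:ℝ) ≠ 0)]
          ring
        linarith
    · have : m = n + 2 := by omega
      subst this
      rw [Finset.Icc_eq_empty (by omega), Finset.sum_empty]
      push_cast
      have : (1 : ℤ) - ((n:ℤ) + 2) = -((n:ℤ)+1) := by ring
      rw [this]
      ring

lemma b_nonneg {b : ℕ → ℝ} (hb : ∀ j, b j = 0 ∨ b j = 1) (j : ℕ) : 0 ≤ b j := by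
  rcases hb j with h | h <;> rw [h] <;> norm_num
lemma b_le_one {b : ℕ → ℝ} (hb : ∀ j, b j = 0 ∨ b j = 1) (j : ℕ) : b j ≤ 1 := by
  rcases hb j with h | h <;> rw [h] <;> norm_num

lemma gg_eq {L : ℕ} (k : ℕ) (hk : k ≤ L) : gg L (k + 1) = (2:ℝ) ^ ((k:ℤ) - L) := by
  unfold gg GG
  rw [← zpow_natCast (2:ℝ), ← zpow_neg]
  congr 1
  have : L + 1 - (k + 1) = L - k := by omega
  rw [this]
  push_cast [hk]
  ring


lemma sum_peel {L k : ℕ} (hk : k < L) (f : ℕ → ℝ) :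
    ∑ j ∈ Finset.Icc (k + 1) L, f j = f (k + 1) + ∑ j ∈ Finset.Icc (k + 2) L, f j := by
  rw [show Finset.Icc (k + 1) L = insert (k + 1) (Finset.Icc (k + 2) L) by
      ext a; simp only [Finset.mem_Icc, Finset.mem_insert]; omega,
    Finset.sum_insert (by simp only [Finset.mem_Icc]; omega)]

lemma zpow_succ_sub (k j : ℕ) : (2:ℝ) ^ (((k:ℤ) + 1) - j) = 2 * 2 ^ ((k:ℤ) - j) := by
  rw [show ((k:ℤ) + 1) - j = ((k:ℤ) - j) + 1 by ring,
    zpow_add_one₀ (by norm_num : (2:ℝ) ≠ 0)]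
  ring

lemma tail_bound {L k : ℕ} {b : ℕ → ℝ} (hb : ∀ j, b j = 0 ∨ b j = 1) (hk : k < L) :
    ∑ j ∈ Finset.Icc (k + 2) L, b j * (2:ℝ) ^ ((k:ℤ) - j) ≤ 1 / 2 - (2:ℝ) ^ ((k:ℤ) - L) := by
  have h1 : ∑ j ∈ Finset.Icc (k + 2) L, b j * (2:ℝ) ^ ((k:ℤ) - j)
      ≤ ∑ j ∈ Finset.Icc (k + 2) L, (2:ℝ) ^ ((k:ℤ) - j) := by
    apply Finset.sum_le_sum
    intro j _
    have := b_le_one hb j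
    nlinarith [zpow_pos (by norm_num : (0:ℝ) < 2) ((k:ℤ) - j)]
  have h2 : ∑ j ∈ Finset.Icc (k + 2) L, (2:ℝ) ^ ((k:ℤ) - j)
      = 2 ^ (k:ℤ) * ∑ j ∈ Finset.Icc (k + 2) L, (2:ℝ) ^ (-(j:ℤ)) := by
    rw [Finset.mul_sum]
    refine Finset.sum_congr rfl fun j _ => ?_
    rw [← zpow_add₀ (by norm_num : (2:ℝ) ≠ 0)]
    congr 1
  rw [h2, geo L (k + 2) (by omega)] at h1
  have h3 : (2:ℝ) ^ (k:ℤ) * ((2:ℝ) ^ (1 - ((k:ℕ)+2:ℤ)) - 2 ^ (-(L:ℤ)))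
      = 1 / 2 - (2:ℝ) ^ ((k:ℤ) - L) := by
    rw [mul_sub, ← zpow_add₀ (by norm_num : (2:ℝ) ≠ 0), ← zpow_add₀ (by norm_num : (2:ℝ) ≠ 0)]
    push_cast
    rw [show (k:ℤ) + (1 - ((k:ℤ)+2)) = -1 by ring, show (k:ℤ) + -(L:ℤ) = (k:ℤ) - L by ring]
    norm_num
  push_cast at h1 h3 ⊢
  linarith

lemma Rr_grid {L : ℕ} {b : ℕ → ℝ} (hb : ∀ j, b j = 0 ∨ b j = 1) : ∀ k, k ≤ L →
    Rr L k (∑ j ∈ Finset.Icc 1 L, b j * (2:ℝ) ^ (-(j:ℤ)))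
      = ∑ j ∈ Finset.Icc (k + 1) L, b j * (2:ℝ) ^ ((k:ℤ) - j) ∧
    (k < L → Bit L (k + 1) (Rr L k (∑ j ∈ Finset.Icc 1 L, b j * (2:ℝ) ^ (-(j:ℤ)))) = b (k + 1)) := by
  have hnn : ∀ (m : ℕ) (s : Finset ℕ), 0 ≤ ∑ j ∈ s, b j * (2:ℝ) ^ ((m:ℤ) - j) := by
    intro m s
    apply Finset.sum_nonneg
    intro j _
    have := b_nonneg hb j
    positivity
  -- the Bit part, given the formula
  have key : ∀ k, k < L →
      Rr L k (∑ j ∈ Finset.Icc 1 L, b j * (2:ℝ) ^ (-(j:ℤ)))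
        = ∑ j ∈ Finset.Icc (k + 1) L, b j * (2:ℝ) ^ ((k:ℤ) - j) →
      Bit L (k + 1) (Rr L k (∑ j ∈ Finset.Icc 1 L, b j * (2:ℝ) ^ (-(j:ℤ)))) = b (k + 1) := by
    intro k hk hR
    have hgg := gg_eq (L := L) k (by omega)
    have hggpos := gg_pos L (k + 1)
    rcases hb (k + 1) with h0 | h1
    · have hle : Rr L k (∑ j ∈ Finset.Icc 1 L, b j * (2:ℝ) ^ (-(j:ℤ))) ≤ aa L (k + 1) := by
        rw [hR, sum_peel hk, h0]
        have := tail_bound hb hk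
        unfold aa
        rw [hgg]
        push_cast at this ⊢
        linarith
      unfold Bit
      rw [relu_of_nonpos (by linarith), relu_of_nonpos (by linarith), h0]
      ring
    · have hge : (1:ℝ)/2 ≤ Rr L k (∑ j ∈ Finset.Icc 1 L, b j * (2:ℝ) ^ (-(j:ℤ))) := by
        rw [hR, sum_peel hk, h1]
        have h2 : (2:ℝ) ^ ((k:ℤ) - ((k:ℕ)+1:ℤ)) = 1/2 := by
          rw [show (k:ℤ) - ((k:ℤ)+1) = -1 by ring]
          norm_num
        push_cast at h2 ⊢
        rw [h2]
        have := hnn k (Finset.Icc (k + 2) L)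
        push_cast at this
        linarith
      have haag : aa L (k + 1) + gg L (k + 1) = 1/2 := by unfold aa; ring
      unfold Bit
      rw [relu_of_nonneg (by linarith), relu_of_nonneg (by linarith), h1]
      calc (Rr L k _ - aa L (k+1) - (Rr L k _ - aa L (k+1) - gg L (k+1))) * GG L (k+1)
          = gg L (k+1) * GG L (k+1) := by ring
        _ = 1 := gg_mul_GG L (k+1)
  intro k
  induction k with
  | zero =>
    intro _
    have hform : Rr L 0 (∑ j ∈ Finset.Icc 1 L, b j * (2:ℝ) ^ (-(j:ℤ)))
        = ∑ j ∈ Finset.Icc (0 + 1) L, b j * (2:ℝ) ^ ((0:ℤ) - j) := by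
      show relu _ = _
      rw [relu_of_nonneg]
      · refine Finset.sum_congr (by norm_num) fun j _ => ?_
        congr 1
        ring
      · apply Finset.sum_nonneg
        intro j _
        have := b_nonneg hb j
        positivity
    exact ⟨by push_cast at hform ⊢; exact hform, fun hk => key 0 hk (by push_cast at hform ⊢; exact hform)⟩
  | succ k ih =>
    intro hk1
    have hR := (ih (by omega)).1
    have hBit := (ih (by omega)).2 (by omega)
    have hform : Rr L (k + 1) (∑ j ∈ Finset.Icc 1 L, b j * (2:ℝ) ^ (-(j:ℤ)))
        = ∑ j ∈ Finset.Icc (k + 2) L, b j * (2:ℝ) ^ (((k:ℤ)+1) - j) := by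
      show relu (2 * Rr L k _ - Bit L (k + 1) (Rr L k _)) = _
      rw [hBit, hR, sum_peel (by omega : k < L)]
      have hkey : 2 * (b (k+1) * (2:ℝ) ^ ((k:ℤ) - ((k:ℕ)+1:ℤ))
            + ∑ j ∈ Finset.Icc (k + 2) L, b j * (2:ℝ) ^ ((k:ℤ) - j)) - b (k + 1)
          = ∑ j ∈ Finset.Icc (k + 2) L, b j * (2:ℝ) ^ (((k:ℤ)+1) - j) := by
        have hh : ∀ j : ℕ, (2:ℝ) * (b j * (2:ℝ) ^ ((k:ℤ) - j)) = b j * (2:ℝ) ^ (((k:ℤ)+1) - j) := by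
          intro j
          rw [zpow_succ_sub]
          ring
        rw [mul_add, Finset.mul_sum]
        rw [Finset.sum_congr rfl fun j _ => hh j]
        have h2 : (2:ℝ) ^ ((k:ℤ) - ((k:ℕ)+1:ℤ)) = 1/2 := by
          rw [show (k:ℤ) - ((k:ℤ)+1) = -1 by ring]
          norm_num
        push_cast at h2 ⊢
        rw [h2]
        ring
      push_cast at hkey ⊢
      rw [hkey]
      apply relu_of_nonneg
      have := hnn (k + 1) (Finset.Icc (k + 2) L)
      push_cast at this
      exact this
    constructor
    · push_cast at hform ⊢
      exact hform
    · intro hlt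
      exact key (k + 1) hlt (by push_cast at hform ⊢; exact hform)

lemma T0_int (k n : ℕ) : T0 k ((n:ℝ)) = if n = k + 1 then 1 else 0 := by
  unfold T0
  have hn : relu ((n:ℝ)) = (n:ℝ) := relu_of_nonneg (Nat.cast_nonneg n)
  rw [hn]
  rcases Nat.lt_trichotomy n (k + 1) with h | h | h
  · have h1 : (n:ℝ) ≤ (k:ℝ) := by exact_mod_cast Nat.lt_succ_iff.mp h
    rw [relu_of_nonpos (by linarith), relu_of_nonpos (by linarith),
      relu_of_nonpos (by linarith), if_neg (by omega)]
    ring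
  · subst h
    rw [if_pos rfl, relu_of_nonneg (by push_cast; linarith),
      relu_of_nonpos (by push_cast; linarith), relu_of_nonpos (by push_cast; linarith)]
    push_cast
    ring
  · have h1 : (k:ℝ) + 2 ≤ (n:ℝ) := by exact_mod_cast h
    rw [relu_of_nonneg (by linarith), relu_of_nonneg (by linarith),
      relu_of_nonneg (by linarith), if_neg (by omega)]
    ring

lemma W0_grid {L : ℕ} {b : ℕ → ℝ} (hb : ∀ j, b j = 0 ∨ b j = 1) (k : ℕ) (hk : k < L) (n : ℕ) :
    W0 L k (∑ j ∈ Finset.Icc 1 L, b j * (2:ℝ) ^ (-(j:ℤ))) ((n:ℝ))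
      = if n = k + 1 then b (k + 1) else 0 := by
  unfold W0
  rw [(Rr_grid hb k (by omega)).2 hk, T0_int]
  by_cases h : n = k + 1
  · rw [if_pos h, if_pos h]
    rw [show b (k+1) + 1 - 1 = b (k+1) by ring]
    exact relu_of_nonneg (b_nonneg hb (k+1))
  · rw [if_neg h, if_neg h]
    apply relu_of_nonpos
    have := b_le_one hb (k + 1)
    linarith

lemma grid_value {L : ℕ} {b : ℕ → ℝ} (hb : ∀ j, b j = 0 ∨ b j = 1) (n : ℕ)
    (h1 : 1 ≤ n) (h2 : n ≤ L) :
    ∑ k ∈ Finset.range L, W0 L k (∑ j ∈ Finset.Icc 1 L, b j * (2:ℝ) ^ (-(j:ℤ))) ((n:ℝ))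
      = b n := by
  have h3 : ∀ k ∈ Finset.range L,
      W0 L k (∑ j ∈ Finset.Icc 1 L, b j * (2:ℝ) ^ (-(j:ℤ))) ((n:ℝ))
        = if k = n - 1 then b n else 0 := by
    intro k hk
    rw [Finset.mem_range] at hk
    rw [W0_grid hb k hk n]
    by_cases h : n = k + 1
    · rw [if_pos h, if_pos (by omega), h]
    · rw [if_neg h, if_neg (by omega)]
  rw [Finset.sum_congr rfl h3, Finset.sum_ite_eq' (Finset.range L) (n - 1) (fun _ => b n),
    if_pos (by simp only [Finset.mem_range]; omega)]

lemma Bit_lip (L k : ℕ) (s t : ℝ) : |Bit L k s - Bit L k t| ≤ GG L k * |s - t| := by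
  have hgg := (gg_pos L k).le
  have hG := (GG_pos L k)
  have h1 : Bit L k s = min (relu (s - aa L k)) (gg L k) * GG L k := by
    unfold Bit
    rw [show s - aa L k - gg L k = (s - aa L k) - gg L k by ring, relu_sub_relu hgg]
  have h2 : Bit L k t = min (relu (t - aa L k)) (gg L k) * GG L k := by
    unfold Bit
    rw [show t - aa L k - gg L k = (t - aa L k) - gg L k by ring, relu_sub_relu hgg]
  rw [h1, h2, ← sub_mul, abs_mul, abs_of_pos hG, mul_comm (GG L k)]
  apply mul_le_mul_of_nonneg_right _ hG.le
  calc |min (relu (s - aa L k)) (gg L k) - min (relu (t - aa L k)) (gg L k)|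
      ≤ |relu (s - aa L k) - relu (t - aa L k)| := min_lip _ _ _
    _ ≤ |(s - aa L k) - (t - aa L k)| := relu_lip _ _
    _ = |s - t| := by ring_nf

lemma T0_lip (k : ℕ) (l l' : ℝ) : |T0 k l - T0 k l'| ≤ |l - l'| := by
  have h1 : ∀ y : ℝ, T0 k y = max 0 (1 - |relu y - ((k:ℝ) + 1)|) := by
    intro y
    have := hat_id (relu y - ((k:ℝ) + 1))
    rw [show relu y - ((k:ℝ)+1) + 1 = relu y - (k:ℝ) by ring,
      show relu y - ((k:ℝ)+1) - 1 = relu y - ((k:ℝ)+2) by ring] at this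
    unfold T0
    rw [this]
  rw [h1, h1, max_comm 0 _, max_comm 0 _]
  calc |max (1 - |relu l - ((k:ℝ)+1)|) 0 - max (1 - |relu l' - ((k:ℝ)+1)|) 0|
      ≤ |(1 - |relu l - ((k:ℝ)+1)|) - (1 - |relu l' - ((k:ℝ)+1)|)| :=
        abs_max_sub_max_le_abs _ _ _
    _ = abs (abs (relu l' - ((k:ℝ)+1)) - abs (relu l - ((k:ℝ)+1))) := by congr 1; ring
    _ ≤ |(relu l' - ((k:ℝ)+1)) - (relu l - ((k:ℝ)+1))| := abs_abs_sub_abs_le_abs_sub _ _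
    _ = |relu l' - relu l| := by congr 1; ring
    _ ≤ |l' - l| := relu_lip _ _
    _ = |l - l'| := abs_sub_comm _ _

noncomputable def rho (L k : ℕ) : ℝ := ∏ j ∈ Finset.range k, (2 + GG L (j + 1))

lemma rho_nonneg (L k : ℕ) : 0 ≤ rho L k := by
  apply Finset.prod_nonneg
  intro j _
  have := GG_pos L (j + 1)
  linarith

lemma one_le_rho (L : ℕ) : ∀ k, 1 ≤ rho L k := by
  intro k
  induction k with
  | zero => simp [rho]
  | succ k ih =>
    unfold rho at ih ⊢
    rw [Finset.prod_range_succ]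
    have := GG_pos L (k + 1)
    nlinarith

lemma Rr_lip (L : ℕ) : ∀ k, ∀ x x' : ℝ, |Rr L k x - Rr L k x'| ≤ rho L k * |x - x'| := by
  intro k
  induction k with
  | zero =>
    intro x x'
    unfold rho
    simpa [Rr] using relu_lip x x'
  | succ k ih =>
    intro x x'
    have h1 : |Rr L (k+1) x - Rr L (k+1) x'|
        ≤ |(2 * Rr L k x - Bit L (k+1) (Rr L k x))
            - (2 * Rr L k x' - Bit L (k+1) (Rr L k x'))| := relu_lip _ _
    have h2 : |(2 * Rr L k x - Bit L (k+1) (Rr L k x))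
            - (2 * Rr L k x' - Bit L (k+1) (Rr L k x'))|
        ≤ 2 * |Rr L k x - Rr L k x'| + |Bit L (k+1) (Rr L k x) - Bit L (k+1) (Rr L k x')| := by
      have := abs_sub (2 * (Rr L k x - Rr L k x'))
        (Bit L (k+1) (Rr L k x) - Bit L (k+1) (Rr L k x'))
      calc |(2 * Rr L k x - Bit L (k+1) (Rr L k x))
            - (2 * Rr L k x' - Bit L (k+1) (Rr L k x'))|
          = |2 * (Rr L k x - Rr L k x') - (Bit L (k+1) (Rr L k x) - Bit L (k+1) (Rr L k x'))| := by
            congr 1; ring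
        _ ≤ |2 * (Rr L k x - Rr L k x')| + |Bit L (k+1) (Rr L k x) - Bit L (k+1) (Rr L k x')| :=
            abs_sub _ _
        _ = 2 * |Rr L k x - Rr L k x'| + |Bit L (k+1) (Rr L k x) - Bit L (k+1) (Rr L k x')| := by
            rw [abs_mul]; norm_num
    have h3 := Bit_lip L (k+1) (Rr L k x) (Rr L k x')
    have h4 := ih x x'
    have h5 : rho L (k + 1) = (2 + GG L (k+1)) * rho L k := by
      unfold rho
      rw [Finset.prod_range_succ]
      ring
    have hG := GG_pos L (k + 1)
    have hrho := rho_nonneg L k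
    have habs := abs_nonneg (x - x')
    rw [h5]
    nlinarith

lemma W0_lip (L k : ℕ) (x x' l l' : ℝ) :
    |W0 L k x l - W0 L k x' l'|
      ≤ GG L (k + 1) * rho L k * |x - x'| + |l - l'| := by
  unfold W0
  calc |relu (Bit L (k+1) (Rr L k x) + T0 k l - 1) - relu (Bit L (k+1) (Rr L k x') + T0 k l' - 1)|
      ≤ |(Bit L (k+1) (Rr L k x) + T0 k l - 1) - (Bit L (k+1) (Rr L k x') + T0 k l' - 1)| :=
        relu_lip _ _
    _ = |(Bit L (k+1) (Rr L k x) - Bit L (k+1) (Rr L k x')) + (T0 k l - T0 k l')| := by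
        congr 1; ring
    _ ≤ |Bit L (k+1) (Rr L k x) - Bit L (k+1) (Rr L k x')| + |T0 k l - T0 k l'| := abs_add_le _ _
    _ ≤ GG L (k + 1) * rho L k * |x - x'| + |l - l'| := by
        have h1 := Bit_lip L (k+1) (Rr L k x) (Rr L k x')
        have h2 := Rr_lip L k x x'
        have h3 := T0_lip k l l'
        have hG := GG_pos L (k+1)
        have := abs_nonneg (Rr L k x - Rr L k x')
        nlinarith

lemma CX_le_rho (L : ℕ) : ∀ k, ∑ j ∈ Finset.range k, GG L (j + 1) * rho L j ≤ rho L k := by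
  intro k
  induction k with
  | zero => simp [rho]
  | succ k ih =>
    rw [Finset.sum_range_succ]
    have h5 : rho L (k + 1) = (2 + GG L (k+1)) * rho L k := by
      unfold rho
      rw [Finset.prod_range_succ]
      ring
    have h1 := one_le_rho L k
    rw [h5]
    nlinarith

lemma exp_bound (L : ℕ) (hL : 1 ≤ L) :
    ∑ j ∈ Finset.range L, (L + 1 - j) ≤ L ^ 2 + 1 := by
  have h1 : ∑ j ∈ Finset.range L, (L + 1 - j) + ∑ j ∈ Finset.range L, j
      = ∑ j ∈ Finset.range L, (L + 1) := by
    rw [← Finset.sum_add_distrib]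
    refine Finset.sum_congr rfl fun j hj => ?_
    rw [Finset.mem_range] at hj
    omega
  rw [Finset.sum_const, Finset.card_range, smul_eq_mul] at h1
  have h2 := Finset.sum_range_id_mul_two L
  obtain ⟨n, rfl⟩ : ∃ n, L = n + 1 := ⟨L - 1, by omega⟩
  have h6 : (n+1) * ((n+1) - 1) = n * n + n := by simp; ring
  have h8 : (n+1) * (n+1+1) = n*n + 3*n + 2 := by ring
  have h7 : (n+1)^2 = n*n + 2*n + 1 := by ring
  have h9 : n ≤ n * n := by nlinarith
  omega

lemma rho_le (L : ℕ) (hL : 1 ≤ L) : rho L L ≤ 2 * 2 ^ (L ^ 2) := by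
  have h1 : rho L L ≤ ∏ j ∈ Finset.range L, (2:ℝ) ^ (L + 1 - j) := by
    unfold rho
    apply Finset.prod_le_prod
    · intro j _
      have := GG_pos L (j + 1)
      linarith
    · intro j hj
      rw [Finset.mem_range] at hj
      have he : L + 1 - j = (L - j) + 1 := by omega
      have he2 : L + 1 - (j + 1) = L - j := by omega
      unfold GG
      rw [he, he2, pow_succ]
      have h2 : (2:ℝ) ≤ 2 ^ (L - j) := by
        calc (2:ℝ) = 2 ^ 1 := (pow_one 2).symm
        _ ≤ 2 ^ (L - j) := by apply pow_le_pow_right₀ (by norm_num); omega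
      linarith
  have h2 : ∏ j ∈ Finset.range L, (2:ℝ) ^ (L + 1 - j)
      = 2 ^ (∑ j ∈ Finset.range L, (L + 1 - j)) := by
    rw [Finset.prod_pow_eq_pow_sum]
  have h3 : (2:ℝ) ^ (∑ j ∈ Finset.range L, (L + 1 - j)) ≤ 2 ^ (L ^ 2 + 1) := by
    apply pow_le_pow_right₀ (by norm_num)
    exact exp_bound L hL
  rw [h2] at h1
  calc rho L L ≤ (2:ℝ) ^ (∑ j ∈ Finset.range L, (L + 1 - j)) := h1
    _ ≤ 2 ^ (L ^ 2 + 1) := h3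
    _ = 2 * 2 ^ (L ^ 2) := by rw [pow_succ]; ring

lemma sum_lip (L : ℕ) (hL : 1 ≤ L) (x x' l l' : ℝ) :
    |(∑ k ∈ Finset.range L, W0 L k x l) - ∑ k ∈ Finset.range L, W0 L k x' l'|
      ≤ 2 * 2 ^ (L ^ 2) * |x - x'| + L * |l - l'| := by
  have h1 : |(∑ k ∈ Finset.range L, W0 L k x l) - ∑ k ∈ Finset.range L, W0 L k x' l'|
      ≤ ∑ k ∈ Finset.range L, |W0 L k x l - W0 L k x' l'| := by
    rw [← Finset.sum_sub_distrib]
    exact Finset.abs_sum_le_sum_abs _ _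
  have h2 : ∑ k ∈ Finset.range L, |W0 L k x l - W0 L k x' l'|
      ≤ ∑ k ∈ Finset.range L, (GG L (k + 1) * rho L k * |x - x'| + |l - l'|) :=
    Finset.sum_le_sum fun k _ => W0_lip L k x x' l l'
  have h3 : ∑ k ∈ Finset.range L, (GG L (k + 1) * rho L k * |x - x'| + |l - l'|)
      = (∑ k ∈ Finset.range L, GG L (k + 1) * rho L k) * |x - x'| + L * |l - l'| := by
    rw [Finset.sum_add_distrib, ← Finset.sum_mul, Finset.sum_const, Finset.card_range,
      nsmul_eq_mul]
  have h4 : (∑ k ∈ Finset.range L, GG L (k + 1) * rho L k) * |x - x'|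
      ≤ (2 * 2 ^ (L ^ 2)) * |x - x'| := by
    apply mul_le_mul_of_nonneg_right _ (abs_nonneg _)
    calc ∑ k ∈ Finset.range L, GG L (k + 1) * rho L k ≤ rho L L := CX_le_rho L L
      _ ≤ 2 * 2 ^ (L ^ 2) := rho_le L hL
  rw [h3] at h2
  linarith

/-- bit extraction.  For any `L ∈ ℕ` there is `φ ∈ NN_{2,1}(8, 2L)` with
`φ(x, ℓ) = x_ℓ` whenever `x = Bin 0.x₁x₂…x_L` with bits `x_j ∈ {0,1}` and `1 ≤ ℓ ≤ L`;
moreover `|φ(x,ℓ) − φ(x',ℓ')| ≤ 2·2^{L²}|x−x'| + L|ℓ−ℓ'|` for all real `x, x', ℓ, ℓ'`. -/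
theorem statement5 (L : ℕ) (hL : 1 ≤ L) :
    ∃ φ ∈ NNScalar 2 8 (2 * L),
      (∀ b : ℕ → ℝ, (∀ j, b j = 0 ∨ b j = 1) → ∀ ℓ : ℕ, 1 ≤ ℓ → ℓ ≤ L →
        φ ![∑ j ∈ Finset.Icc 1 L, b j * (2 : ℝ) ^ (-(j : ℤ)), (ℓ : ℝ)] = b ℓ) ∧
      (∀ x x' l l' : ℝ,
        |φ ![x, l] - φ ![x', l']| ≤ 2 * 2 ^ (L ^ 2) * |x - x'| + L * |l - l'|) := by
  refine ⟨fun v => ∑ k ∈ Finset.range L, W0 L k (v 0) (v 1), ?_, ?_, ?_⟩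
  · refine ⟨(net L).eval, ⟨net L, rfl, ?_, rfl⟩, ?_⟩
    · intro ℓ _ _
      show (if ℓ = 0 then 2 else if ℓ = 2 * L + 1 then 1 else 8) ≤ 8
      split_ifs <;> omega
    · funext v
      exact (eval_spec L hL v).symm
  · intro b hb ℓ h1 h2
    simp only [Matrix.cons_val_zero, Matrix.cons_val_one, Matrix.head_cons]
    exact grid_value hb ℓ h1 h2
  · intro x x' l l'
    simp only [Matrix.cons_val_zero, Matrix.cons_val_one, Matrix.head_cons]
    exact sum_lip L hL x x' l l'
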